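/- If a sequence (Tₙ) of A-bounded operators converges A-uniformly to an A-bounded operator T (i.e., ‖Tₙ − T‖_A → 0), then for every q ∈ ℂ with 0 < |q| ≤ 1, ω_{A,q}(Tₙ) → ω_{A,q}(T). -/

import Mathlib

noncomputable def innA {H : Type*} [NormedAddCommGroup H] [InnerProductSpace ℂ H]
    (A : H →L[ℂ] H) (x y : H) : ℂ := inner ℂ (A x) y

noncomputable def snA {H : Type*} [NormedAddCommGroup H] [InnerProductSpace ℂ H]
    (A : H →L[ℂ] H) (x : H) : ℝ := Real.sqrt (innA A x x).re

noncomputable def opNormA {H : Type*} [NormedAddCommGroup H] [InnerProductSpace ℂ H]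
    (A T : H →L[ℂ] H) : ℝ := sSup {r : ℝ | ∃ x : H, snA A x = 1 ∧ r = snA A (T x)}

def ABounded {H : Type*} [NormedAddCommGroup H] [InnerProductSpace ℂ H]
    (A T : H →L[ℂ] H) : Prop := ∃ c > 0, ∀ x : H, snA A (T x) ≤ c * snA A x

noncomputable def wAq {H : Type*} [NormedAddCommGroup H] [InnerProductSpace ℂ H]
    (A T : H →L[ℂ] H) (q : ℂ) : ℝ :=
  sSup {r : ℝ | ∃ x y : H, snA A x = 1 ∧ snA A y = 1 ∧ innA A x y = q ∧
    r = ‖innA A (T x) y‖}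

noncomputable def cAq {H : Type*} [NormedAddCommGroup H] [InnerProductSpace ℂ H]
    (A T : H →L[ℂ] H) (q : ℂ) : ℝ :=
  sInf {r : ℝ | ∃ x y : H, snA A x = 1 ∧ snA A y = 1 ∧ innA A x y = q ∧
    r = ‖innA A (T x) y‖}

noncomputable def wA {H : Type*} [NormedAddCommGroup H] [InnerProductSpace ℂ H]
    (A T : H →L[ℂ] H) : ℝ :=
  sSup {r : ℝ | ∃ x : H, snA A x = 1 ∧ r = ‖innA A (T x) x‖}

noncomputable def cA {H : Type*} [NormedAddCommGroup H] [InnerProductSpace ℂ H]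
    (A T : H →L[ℂ] H) : ℝ :=
  sInf {r : ℝ | ∃ x : H, snA A x = 1 ∧ r = ‖innA A (T x) x‖}

def WAq {H : Type*} [NormedAddCommGroup H] [InnerProductSpace ℂ H]
    (A T : H →L[ℂ] H) (q : ℂ) : Set ℂ :=
  {r : ℂ | ∃ x y : H, snA A x = 1 ∧ snA A y = 1 ∧ innA A x y = q ∧ r = innA A (T x) y}

section Aux

variable {H : Type*} [NormedAddCommGroup H] [InnerProductSpace ℂ H] [CompleteSpace H]
  {A : H →L[ℂ] H}

/-- The pre-inner-product core induced by a positive operator. -/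
noncomputable def coreA (A : H →L[ℂ] H) (hA : A.IsPositive) :
    PreInnerProductSpace.Core ℂ H where
  inner x y := innA A x y
  conj_inner_symm x y := by
    have hsym := (ContinuousLinearMap.isSelfAdjoint_iff_isSymmetric.mp hA.isSelfAdjoint) y x
    simp only [innA]
    rw [← inner_conj_symm (A x) y]
    exact congrArg _ hsym
  re_inner_nonneg x := hA.re_inner_nonneg_left x
  add_left x y z := by simp [innA, map_add, inner_add_left]
  smul_left x y r := by simp [innA, map_smul, inner_smul_left, mul_comm]

lemma innA_re_nonneg (hA : A.IsPositive) (x : H) : 0 ≤ (innA A x x).re :=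
  hA.re_inner_nonneg_left x

lemma snA_nonneg (x : H) : 0 ≤ snA A x := Real.sqrt_nonneg _

lemma snA_mul_self (hA : A.IsPositive) (x : H) : snA A x * snA A x = (innA A x x).re :=
  Real.mul_self_sqrt (innA_re_nonneg hA x)

lemma abs_innA_le (hA : A.IsPositive) (x y : H) :
    ‖innA A x y‖ ≤ snA A x * snA A y := by
  have h : ‖(innA A x y : ℂ)‖ * ‖(innA A y x : ℂ)‖ ≤ (innA A x x).re * (innA A y y).re :=
    @InnerProductSpace.Core.inner_mul_inner_self_le ℂ H _ _ _ (coreA A hA) x y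
  have hsymm : ‖(innA A y x : ℂ)‖ = ‖(innA A x y : ℂ)‖ :=
    @InnerProductSpace.Core.norm_inner_symm ℂ H _ _ _ (coreA A hA) y x
  rw [hsymm, ← snA_mul_self hA x, ← snA_mul_self hA y] at h
  have h' : ‖(innA A x y : ℂ)‖ * ‖(innA A x y : ℂ)‖ ≤ (snA A x * snA A y) * (snA A x * snA A y) :=
    le_of_le_of_eq h (by ring)
  exact nonneg_le_nonneg_of_sq_le_sq (mul_nonneg (snA_nonneg x) (snA_nonneg y)) h'

lemma snA_neg (x : H) : snA A (-x) = snA A x := by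
  simp [snA, innA, map_neg, inner_neg_neg]

lemma innA_re_symm (hA : A.IsPositive) (x y : H) : (innA A y x).re = (innA A x y).re := by
  have hsym := (ContinuousLinearMap.isSelfAdjoint_iff_isSymmetric.mp hA.isSelfAdjoint) y x
  have : innA A y x = starRingEnd ℂ (innA A x y) := by
    simp only [innA]
    exact hsym.trans (inner_conj_symm y (A x)).symm
  rw [this, Complex.conj_re]

lemma snA_add_le (hA : A.IsPositive) (x y : H) : snA A (x + y) ≤ snA A x + snA A y := by
  have hexp : (innA A (x + y) (x + y)).re
      = (innA A x x).re + (innA A x y).re + (innA A y x).re + (innA A y y).re := by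
    simp [innA, map_add, inner_add_left, inner_add_right]
    ring
  have hre : (innA A x y).re ≤ snA A x * snA A y :=
    (Complex.re_le_norm _).trans (abs_innA_le hA x y)
  have hle : (innA A (x + y) (x + y)).re ≤ (snA A x + snA A y) ^ 2 := by
    rw [hexp, innA_re_symm hA x y]
    have hx := snA_mul_self hA x
    have hy := snA_mul_self hA y
    nlinarith
  calc snA A (x + y) = Real.sqrt (innA A (x + y) (x + y)).re := rfl
    _ ≤ Real.sqrt ((snA A x + snA A y) ^ 2) := Real.sqrt_le_sqrt hle
    _ = snA A x + snA A y := Real.sqrt_sq (add_nonneg (snA_nonneg x) (snA_nonneg y))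

lemma snA_sub_le (hA : A.IsPositive) (x y : H) : snA A (x - y) ≤ snA A x + snA A y := by
  rw [sub_eq_add_neg]
  exact (snA_add_le hA x (-y)).trans_eq (by rw [snA_neg])

lemma ABounded.sub (hA : A.IsPositive) {S T : H →L[ℂ] H}
    (hS : ABounded A S) (hT : ABounded A T) : ABounded A (S - T) := by
  obtain ⟨c1, hc1, h1⟩ := hS
  obtain ⟨c2, hc2, h2⟩ := id hT
  refine ⟨c1 + c2, by positivity, fun x => ?_⟩
  have : (S - T) x = S x - T x := rfl
  rw [this]
  calc snA A (S x - T x) ≤ snA A (S x) + snA A (T x) := snA_sub_le hA _ _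
    _ ≤ c1 * snA A x + c2 * snA A x := add_le_add (h1 x) (h2 x)
    _ = (c1 + c2) * snA A x := by ring

lemma snA_apply_le_opNormA (hA : A.IsPositive) {S : H →L[ℂ] H} (hS : ABounded A S)
    {x : H} (hx : snA A x = 1) : snA A (S x) ≤ opNormA A S := by
  obtain ⟨c, hc, h⟩ := hS
  refine le_csSup ⟨c, ?_⟩ ⟨x, hx, rfl⟩
  rintro r ⟨z, hz, rfl⟩
  simpa [hz] using h z

lemma opNormA_sub_comm (S T : H →L[ℂ] H) : opNormA A (S - T) = opNormA A (T - S) := by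
  unfold opNormA
  congr 1
  ext r
  constructor
  · rintro ⟨x, hx, rfl⟩
    refine ⟨x, hx, ?_⟩
    have : (T - S) x = -((S - T) x) := by
      simp [ContinuousLinearMap.sub_apply]
    rw [this, snA_neg]
  · rintro ⟨x, hx, rfl⟩
    refine ⟨x, hx, ?_⟩
    have : (S - T) x = -((T - S) x) := by
      simp [ContinuousLinearMap.sub_apply]
    rw [this, snA_neg]

lemma wAq_le_add (hA : A.IsPositive) {S T : H →L[ℂ] H} (q : ℂ)
    (hS : ABounded A S) (hT : ABounded A T)
    (hP : ∃ x y : H, snA A x = 1 ∧ snA A y = 1 ∧ innA A x y = q) :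
    wAq A S q ≤ wAq A T q + opNormA A (S - T) := by
  obtain ⟨x0, y0, hx0, hy0, hq0'⟩ := hP
  obtain ⟨c2, hc2, h2⟩ := id hT
  have hbddT : BddAbove {r : ℝ | ∃ x y : H, snA A x = 1 ∧ snA A y = 1 ∧ innA A x y = q ∧
      r = ‖innA A (T x) y‖} := by
    refine ⟨c2, ?_⟩
    rintro r ⟨x, y, hx, hy, hq, rfl⟩
    calc ‖innA A (T x) y‖ ≤ snA A (T x) * snA A y := abs_innA_le hA _ _
      _ = snA A (T x) := by rw [hy, mul_one]
      _ ≤ c2 * snA A x := h2 x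
      _ = c2 := by rw [hx, mul_one]
  refine csSup_le ⟨‖innA A (S x0) y0‖, ⟨x0, y0, hx0, hy0, hq0', rfl⟩⟩ ?_
  rintro r ⟨x, y, hx, hy, hq, rfl⟩
  have hsplit : innA A (S x) y = innA A (T x) y + innA A ((S - T) x) y := by
    simp only [innA, ContinuousLinearMap.sub_apply, map_sub, inner_sub_left]
    ring
  calc ‖innA A (S x) y‖
      ≤ ‖innA A (T x) y‖ + ‖innA A ((S - T) x) y‖ := by
        rw [hsplit]; exact norm_add_le _ _
    _ ≤ wAq A T q + opNormA A (S - T) := by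
        apply add_le_add
        · exact le_csSup hbddT ⟨x, y, hx, hy, hq, rfl⟩
        · calc ‖innA A ((S - T) x) y‖
              ≤ snA A ((S - T) x) * snA A y := abs_innA_le hA _ _
            _ = snA A ((S - T) x) := by rw [hy, mul_one]
            _ ≤ opNormA A (S - T) := snA_apply_le_opNormA hA (ABounded.sub hA hS hT) hx

end Aux

theorem stmt15 {H : Type*} [NormedAddCommGroup H] [InnerProductSpace ℂ H] [CompleteSpace H]
    (A : H →L[ℂ] H) (hA : A.IsPositive) (hA0 : A ≠ 0)
    (Tn : ℕ → H →L[ℂ] H) (T : H →L[ℂ] H)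
    (hTn : ∀ n, ABounded A (Tn n)) (hT : ABounded A T)
    (hconv : Filter.Tendsto (fun n => opNormA A (Tn n - T)) Filter.atTop (nhds 0))
    (q : ℂ) (hq0 : 0 < ‖q‖) (hq1 : ‖q‖ ≤ 1) :
    Filter.Tendsto (fun n => wAq A (Tn n) q) Filter.atTop (nhds (wAq A T q)) := by
  by_cases hP : ∃ x y : H, snA A x = 1 ∧ snA A y = 1 ∧ innA A x y = q
  · have key : ∀ n, |wAq A (Tn n) q - wAq A T q| ≤ opNormA A (Tn n - T) := by
      intro n
      rw [abs_sub_le_iff]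
      constructor
      · linarith [wAq_le_add hA q (hTn n) hT hP]
      · have := wAq_le_add hA q hT (hTn n) hP
        rw [opNormA_sub_comm] at this
        linarith
    rw [← tendsto_sub_nhds_zero_iff]
    refine squeeze_zero_norm (fun n => ?_) hconv
    rw [Real.norm_eq_abs]
    exact key n
  · have hzero : ∀ S : H →L[ℂ] H, wAq A S q = 0 := by
      intro S
      unfold wAq
      convert Real.sSup_empty using 2
      rw [Set.eq_empty_iff_forall_notMem]
      rintro r ⟨x, y, hx, hy, hq, -⟩
      exact hP ⟨x, y, hx, hy, hq⟩
    simp only [hzero]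
    exact tendsto_const_nhds
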